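/- Assume d ≥ 2. For every n ≥ 1, one has P^{2n−1} = ((2d−1)/(2d−2)) Pⁿ ∘ (P*)ⁿ ∘ U − (1/(2d−2)) P^{n−1} ∘ (P*)^{n−1} ∘ U, and equally P^{2n−1} = ((2d−1)/(2d−2)) U ∘ (P*)ⁿ ∘ Pⁿ − (1/(2d−2)) U ∘ (P*)^{n−1} ∘ P^{n−1}. -/

import Mathlib

open Finset

/-- The index set `I = {−d, …, −1, 1, …, d}`. -/
abbrev Idx (d : ℕ) : Type :=
  {i : ℤ // i ∈ (Finset.Icc (-(d : ℤ)) (d : ℤ)).erase 0}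

instance (d : ℕ) : Neg (Idx d) :=
  ⟨fun i => ⟨-i.1, by
    have h := i.2
    simp only [Finset.mem_erase, Finset.mem_Icc] at h ⊢
    omega⟩⟩

lemma Idx.neg_neg {d : ℕ} (i : Idx d) : - - i = i := Subtype.ext (by
  show -(-i.1) = i.1
  ring)

lemma Idx.card_univ (d : ℕ) : (Finset.univ : Finset (Idx d)).card = 2 * d := by
  rw [Finset.card_univ]
  have : Fintype.card (Idx d) = ((Finset.Icc (-(d : ℤ)) (d : ℤ)).erase 0).card :=
    Fintype.card_coe _
  rw [this, Finset.card_erase_of_mem (by simp), Int.card_Icc]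
  omega

/-- For `d ≥ 2` and every `n ≥ 1` (encoded as `n + 1`),
`P^{2n−1} = ((2d−1)/(2d−2)) Pⁿ ∘ (P*)ⁿ ∘ U − (1/(2d−2)) P^{n−1} ∘ (P*)^{n−1} ∘ U`, and equally
`P^{2n−1} = ((2d−1)/(2d−2)) U ∘ (P*)ⁿ ∘ Pⁿ − (1/(2d−2)) U ∘ (P*)^{n−1} ∘ P^{n−1}`. -/
theorem P_odd_pow_eq
    {d : ℕ} (hd : 2 ≤ d)
    {A : Type*} [AddCommGroup A] [Module ℝ A]
    (σ : Idx d → (A ≃ₗ[ℝ] A))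
    (hσ : ∀ i : Idx d, σ (-i) = (σ i).symm)
    (P Pstar U : Module.End ℝ (Idx d → A))
    (hP : ∀ (b : Idx d → A) (i : Idx d),
      P b i = (2 * (d : ℝ) - 1)⁻¹ •
        ∑ j ∈ Finset.univ.filter (fun j : Idx d => j ≠ -i), σ i (b j))
    (hPstar : ∀ (b : Idx d → A) (i : Idx d),
      Pstar b i = (2 * (d : ℝ) - 1)⁻¹ •
        ∑ j ∈ Finset.univ.filter (fun j : Idx d => j ≠ i), σ j (b (-j)))
    (hU : ∀ (b : Idx d → A) (i : Idx d), U b i = σ i (b (-i)))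
    (n : ℕ) :
    P ^ (2 * n + 1)
      = ((2 * (d : ℝ) - 1) / (2 * (d : ℝ) - 2)) • (P ^ (n + 1) * Pstar ^ (n + 1) * U)
        - (2 * (d : ℝ) - 2)⁻¹ • (P ^ n * Pstar ^ n * U)
    ∧ P ^ (2 * n + 1)
      = ((2 * (d : ℝ) - 1) / (2 * (d : ℝ) - 2)) • (U * (Pstar ^ (n + 1) * P ^ (n + 1)))
        - (2 * (d : ℝ) - 2)⁻¹ • (U * (Pstar ^ n * P ^ n)) := by
  have hd' : (2 : ℝ) ≤ (d : ℝ) := by exact_mod_cast hd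
  set r : ℝ := 2 * (d : ℝ) - 1 with hr_def
  have hr : r ≠ 0 := by simp only [hr_def]; nlinarith
  have hs : (2 * (d : ℝ) - 2) ≠ 0 := by nlinarith
  -- U is an involution
  have hUU : U * U = 1 := by
    apply LinearMap.ext; intro b; funext i
    show U (U b) i = b i
    rw [hU, hU, Idx.neg_neg, hσ]
    exact (σ i).apply_symm_apply _
  -- P * U = U * Pstar
  have hPUeq : P * U = U * Pstar := by
    apply LinearMap.ext; intro b; funext i
    show P (U b) i = U (Pstar b) i
    rw [hP, hU, hPstar, map_smul, map_sum]
    congr 1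
    refine Finset.sum_congr rfl fun j hj => ?_
    rw [hU]
  -- hence Pstar = U * P * U
  have hPstar_eq : Pstar = U * P * U := by
    have h := congrArg (fun X => U * X) hPUeq
    simp only [← mul_assoc, hUU, one_mul] at h
    exact h.symm
  have hUl : ∀ X : Module.End ℝ (Idx d → A), U * (U * X) = X := fun X => by
    rw [← mul_assoc, hUU, one_mul]
  -- powers of Pstar
  have hpow : ∀ m : ℕ, Pstar ^ m = U * P ^ m * U := by
    intro m
    induction m with
    | zero => simp [hUU]
    | succ k ih =>
      rw [pow_succ, pow_succ, ih, hPstar_eq]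
      simp only [mul_assoc, hUl]
  -- the key local relation  P U P = ((2d-2)/(2d-1)) P + (2d-1)⁻¹ U
  have hKey : P * U * P = ((2 * (d : ℝ) - 2) / r) • P + r⁻¹ • U := by
    apply LinearMap.ext; intro b; funext i
    show P (U (P b)) i = (((2 * (d : ℝ) - 2) / r) • P b + r⁻¹ • U b) i
    have hinner : ∀ j : Idx d, U (P b) j = r⁻¹ • ((∑ k, b k) - b j) := by
      intro j
      rw [hU, hP, Idx.neg_neg, map_smul, map_sum]
      congr 1
      rw [show (fun k : Idx d => σ j ((σ (-j)) (b k))) = fun k => b k from ?_]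
      · rw [Finset.filter_ne', Finset.sum_erase_eq_sub (Finset.mem_univ j)]
      · funext k
        rw [hσ]
        exact (σ j).apply_symm_apply _
    rw [hP]
    simp only [hinner]
    have hcard : (Finset.univ.filter (fun j : Idx d => j ≠ -i)).card = 2 * d - 1 := by
      rw [Finset.filter_ne', Finset.card_erase_of_mem (Finset.mem_univ _), Idx.card_univ]
    have hsum :
        ∑ j ∈ Finset.univ.filter (fun j : Idx d => j ≠ -i),
          σ i (r⁻¹ • ((∑ k, b k) - b j))
        = (r⁻¹ * (2 * (d : ℝ) - 1)) • σ i (∑ k, b k)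
            - r⁻¹ • σ i ((∑ k, b k) - b (-i)) := by
      have : ∀ j : Idx d, σ i (r⁻¹ • ((∑ k, b k) - b j))
          = r⁻¹ • σ i (∑ k, b k) - r⁻¹ • σ i (b j) := by
        intro j; rw [map_smul, map_sub, smul_sub]
      simp only [this]
      rw [Finset.sum_sub_distrib, Finset.sum_const, ← Finset.smul_sum, ← map_sum,
        Finset.filter_ne', Finset.sum_erase_eq_sub (Finset.mem_univ (-i)),
        Finset.card_erase_of_mem (Finset.mem_univ _), Idx.card_univ,
        map_sub, smul_sub]
      have h21 : ((2 * d - 1 : ℕ) : ℝ) = 2 * (d : ℝ) - 1 := by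
        have : (1:ℕ) ≤ 2 * d := by omega
        push_cast [this]
        ring
      rw [← Nat.cast_smul_eq_nsmul ℝ (2 * d - 1), h21]
      module
    rw [hsum]
    have hPbi : P b i = r⁻¹ • σ i ((∑ k, b k) - b (-i)) := by
      rw [hP, Finset.filter_ne', ← map_sum,
        Finset.sum_erase_eq_sub (Finset.mem_univ (-i))]
    simp only [Pi.add_apply, Pi.smul_apply, hPbi, hU]
    have hsig : σ i ((∑ k, b k) - b (-i)) = σ i (∑ k, b k) - σ i (b (-i)) := map_sub _ _ _
    rw [hsig, smul_sub, smul_sub, smul_sub, smul_sub]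
    match_scalars <;> field_simp <;> ring
  -- both operator combinations equal P^(n+1) * U * P^(n+1)
  have hmixed : ∀ m : ℕ, P ^ m * Pstar ^ m * U = P ^ m * U * P ^ m ∧
      U * (Pstar ^ m * P ^ m) = P ^ m * U * P ^ m := by
    intro m
    constructor
    · rw [hpow]
      simp only [mul_assoc, hUU, mul_one]
    · rw [hpow]
      simp only [← mul_assoc, hUU, one_mul]
  -- reduce the sandwich
  have hsand : ∀ m : ℕ, P ^ (m + 1) * U * P ^ (m + 1)
      = ((2 * (d : ℝ) - 2) / r) • P ^ (2 * m + 1) + r⁻¹ • (P ^ m * U * P ^ m) := by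
    intro m
    have h1 : P ^ (m + 1) * U * P ^ (m + 1) = P ^ m * (P * U * P) * P ^ m := by
      nth_rewrite 2 [pow_succ']
      rw [pow_succ]
      simp only [mul_assoc]
    have h2 : m + 1 + m = 2 * m + 1 := by omega
    rw [h1, hKey, mul_add, add_mul, mul_smul_comm, mul_smul_comm, smul_mul_assoc,
      smul_mul_assoc, ← pow_succ, ← pow_add, h2]
  have hs1 : (d : ℝ) - 1 ≠ 0 := by linarith
  constructor
  · rw [(hmixed (n + 1)).1, (hmixed n).1, hsand n]
    match_scalars <;> field_simp <;> ring
  · rw [(hmixed (n + 1)).2, (hmixed n).2, hsand n]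
    match_scalars <;> field_simp <;> ring
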